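/- Let 𝐙₊ = {(a, (a_m)_{m∈ℤ}) ∈ 𝐙 : a ≥ 0 and a_m ≥ 0 for all m ∈ ℤ}, and define C ⊆ ℚ ⊕ 𝐐 by C = {(q, y) ∈ ℚ ⊕ 𝐐 : q > 0} ∪ {(0, y) : y ∈ 𝐙₊} (viewing 𝐙₊ ⊆ 𝐙 ⊆ 𝐐). Then: (i) C + C ⊆ C; (ii) C ∩ (−C) = {0}; (iii) C − C = ℚ ⊕ 𝐐; (iv) ℚ ⊕ 𝐐 is torsion-free; but (v) the ordered group (ℚ ⊕ 𝐐, C) is NOT unperforated (hence not weakly unperforated): the element g = (0, (1/2, (3^{|m|}/2)_{m∈ℤ})) satisfies 2·g ∈ C but g ∉ C. -/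
import Mathlib


noncomputable section

/-- The group 𝐐: subgroup of ℚ ⊕ ∏_{m∈ℤ} ℚ of pairs (a, (a_m)) with
a_m = 3^{|m|}·a for all but finitely many m. -/
def bbQ : AddSubgroup (ℚ × (ℤ → ℚ)) where
  carrier := {x | {m : ℤ | x.2 m ≠ 3 ^ m.natAbs * x.1}.Finite}
  zero_mem' := by
    have : {m : ℤ | (0 : ℚ × (ℤ → ℚ)).2 m ≠ 3 ^ m.natAbs * (0 : ℚ × (ℤ → ℚ)).1} = ∅ := by
      ext m; simp
    simp only [Set.mem_setOf_eq, this]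
    exact Set.finite_empty
  add_mem' := by
    intro x y hx hy
    refine Set.Finite.subset (Set.Finite.union hx hy) ?_
    intro m hm
    simp only [Set.mem_setOf_eq, Set.mem_union]
    by_contra h
    push_neg at h
    apply hm
    show (x + y).2 m = 3 ^ m.natAbs * (x + y).1
    have : (x + y).2 m = x.2 m + y.2 m := rfl
    rw [this, h.1, h.2]
    show _ = 3 ^ m.natAbs * (x.1 + y.1)
    ring
  neg_mem' := by
    intro x hx
    refine Set.Finite.subset hx ?_
    intro m hm
    simp only [Set.mem_setOf_eq] at hm ⊢
    intro h
    apply hm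
    have h2 : (-x).2 m = -(x.2 m) := rfl
    have h1 : (-x).1 = -x.1 := rfl
    rw [h2, h1, h]
    ring

lemma mem_bbQ {x : ℚ × (ℤ → ℚ)} :
    x ∈ bbQ ↔ {m : ℤ | x.2 m ≠ 3 ^ m.natAbs * x.1}.Finite := Iff.rfl

/-- The group 𝐙: subgroup of 𝐐 of pairs (a, (a_m)) with a ∈ ℤ[1/3] and each a_m ∈ ℤ. -/
def bbZ : AddSubgroup (ℚ × (ℤ → ℚ)) where
  carrier := {x | x ∈ bbQ ∧ (∃ k : ℤ, ∃ j : ℕ, x.1 = (k : ℚ) / 3 ^ j) ∧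
    ∀ m : ℤ, ∃ n : ℤ, x.2 m = (n : ℚ)}
  zero_mem' := by
    refine ⟨zero_mem _, ⟨0, 0, by norm_num⟩, fun m => ⟨0, rfl⟩⟩
  add_mem' := by
    rintro x y ⟨hxQ, ⟨k, j, hk⟩, hxi⟩ ⟨hyQ, ⟨k', j', hk'⟩, hyi⟩
    refine ⟨add_mem hxQ hyQ, ⟨k * 3 ^ j' + k' * 3 ^ j, j + j', ?_⟩, fun m => ?_⟩
    · show x.1 + y.1 = _
      rw [hk, hk']
      push_cast
      rw [pow_add]
      field_simp
    · obtain ⟨n, hn⟩ := hxi m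
      obtain ⟨n', hn'⟩ := hyi m
      exact ⟨n + n', by show x.2 m + y.2 m = _; rw [hn, hn']; push_cast; ring⟩
  neg_mem' := by
    rintro x ⟨hxQ, ⟨k, j, hk⟩, hxi⟩
    refine ⟨neg_mem hxQ, ⟨-k, j, ?_⟩, fun m => ?_⟩
    · show -x.1 = _
      rw [hk]; push_cast; ring
    · obtain ⟨n, hn⟩ := hxi m
      exact ⟨-n, by show -(x.2 m) = _; rw [hn]; push_cast; ring⟩

/-- The positive cone 𝐙₊ = {(a, (a_m)) ∈ 𝐙 : a ≥ 0 and a_m ≥ 0 for all m}. -/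
def bbZpos : Set (ℚ × (ℤ → ℚ)) :=
  {x | x ∈ bbZ ∧ 0 ≤ x.1 ∧ ∀ m : ℤ, 0 ≤ x.2 m}

/-- The element (1/2, (3^{|m|}/2)_m) of ℚ ⊕ ∏ℚ. -/
def halfElem : ℚ × (ℤ → ℚ) := ((1 / 2 : ℚ), fun m : ℤ => ((3 : ℚ) ^ m.natAbs / 2))

lemma halfElem_mem_bbQ : halfElem ∈ bbQ := by
  have h : {m : ℤ | halfElem.2 m ≠ 3 ^ m.natAbs * halfElem.1} = ∅ := by
    ext m
    simp only [halfElem, Set.mem_setOf_eq, Set.mem_empty_iff_false, iff_false, not_not]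
    ring
  rw [mem_bbQ, h]
  exact Set.finite_empty

/-- The cone C = {(q, y) ∈ ℚ ⊕ 𝐐 : q > 0} ∪ {(0, y) : y ∈ 𝐙₊}. -/
def coneC : Set (ℚ × ↥bbQ) :=
  {p | 0 < p.1 ∨ (p.1 = 0 ∧ ((p.2 : ℚ × (ℤ → ℚ)) ∈ bbZpos))}

/-- (ℚ ⊕ 𝐐, C) is a torsion-free ordered abelian group:
(i) C + C ⊆ C; (ii) C ∩ (−C) = {0}; (iii) C − C = ℚ ⊕ 𝐐; (iv) ℚ ⊕ 𝐐 is torsion-free;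
but (v) it is NOT unperforated (hence not weakly unperforated):
g = (0, (1/2, (3^{|m|}/2)_m)) satisfies 2·g ∈ C but g ∉ C. -/
theorem coneC_not_weakly_unperforated :
    (∀ p ∈ coneC, ∀ q ∈ coneC, p + q ∈ coneC) ∧
    (∀ p, p ∈ coneC → -p ∈ coneC → p = 0) ∧
    (∀ p : ℚ × ↥bbQ, ∃ a ∈ coneC, ∃ b ∈ coneC, p = a - b) ∧
    (∀ p : ℚ × ↥bbQ, ∀ n : ℕ, 0 < n → n • p = 0 → p = 0) ∧
    ((2 : ℕ) • (((0 : ℚ), (⟨halfElem, halfElem_mem_bbQ⟩ : ↥bbQ)) : ℚ × ↥bbQ) ∈ coneC ∧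
      (((0 : ℚ), (⟨halfElem, halfElem_mem_bbQ⟩ : ↥bbQ)) : ℚ × ↥bbQ) ∉ coneC) := by
  refine ⟨?_, ?_, ?_, ?_, ?_, ?_⟩
  · -- (i) closed under addition
    rintro p hp q hq
    rcases hp with hp | ⟨hp0, hpZ⟩
    · left; show 0 < p.1 + q.1
      rcases hq with hq | ⟨hq0, _⟩
      · exact add_pos hp hq
      · rw [hq0, add_zero]; exact hp
    · rcases hq with hq | ⟨hq0, hqZ⟩
      · left; show 0 < p.1 + q.1; rw [hp0, zero_add]; exact hq
      · right
        refine ⟨by show p.1 + q.1 = 0; rw [hp0, hq0, add_zero], ?_⟩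
        obtain ⟨hpZ', hp1, hp2⟩ := hpZ
        obtain ⟨hqZ', hq1, hq2⟩ := hqZ
        refine ⟨add_mem hpZ' hqZ', ?_, fun m => ?_⟩
        · exact add_nonneg hp1 hq1
        · exact add_nonneg (hp2 m) (hq2 m)
  · -- (ii) C ∩ (-C) = 0
    rintro p hp hnp
    rcases hp with hp | ⟨hp0, hpZ⟩
    · rcases hnp with hnp | ⟨hnp0, _⟩
      · exfalso
        have : (0:ℚ) < -p.1 := hnp
        linarith
      · exfalso
        have : -p.1 = 0 := hnp0
        have : p.1 = 0 := by linarith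
        rw [this] at hp; exact lt_irrefl _ hp
    · rcases hnp with hnp | ⟨hnp0, hnpZ⟩
      · exfalso
        have : (0:ℚ) < -p.1 := hnp
        rw [hp0] at this; simp at this
      · obtain ⟨_, hp1, hp2⟩ := hpZ
        obtain ⟨_, hn1, hn2⟩ := hnpZ
        have hv1 : ((p.2 : ℚ × (ℤ → ℚ))).1 = 0 := by
          have : (0:ℚ) ≤ -((p.2 : ℚ × (ℤ → ℚ))).1 := hn1
          linarith
        have hv2 : ∀ m : ℤ, ((p.2 : ℚ × (ℤ → ℚ))).2 m = 0 := by
          intro m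
          have h1 := hp2 m
          have h2 : (0:ℚ) ≤ -(((p.2 : ℚ × (ℤ → ℚ))).2 m) := hn2 m
          linarith
        have : (p.2 : ℚ × (ℤ → ℚ)) = 0 := by
          ext
          · exact hv1
          · exact hv2 _
        have hp2' : p.2 = 0 := Subtype.ext this
        exact Prod.ext hp0 hp2'
  · -- (iii) C - C = everything
    intro p
    refine ⟨(|p.1| + 1, p.2), Or.inl ?_, (|p.1| + 1 - p.1, 0), Or.inl ?_, ?_⟩
    · show (0:ℚ) < |p.1| + 1
      positivity
    · show (0:ℚ) < |p.1| + 1 - p.1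
      have := le_abs_self p.1
      linarith
    · refine Prod.ext ?_ ?_
      · show p.1 = |p.1| + 1 - (|p.1| + 1 - p.1); ring
      · show p.2 = p.2 - 0; rw [sub_zero]
  · -- (iv) torsion-free
    intro p n hn h
    have h1 : (n : ℚ) • p.1 = 0 := by
      have h1' : n • p.1 = 0 := congrArg Prod.fst h
      rw [nsmul_eq_mul] at h1'
      simpa using h1'
    have h2 : n • p.2 = 0 := congrArg Prod.snd h
    have hn' : (n : ℚ) ≠ 0 := Nat.cast_ne_zero.mpr hn.ne'
    have hp1 : p.1 = 0 := by
      rcases smul_eq_zero.mp h1 with h | h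
      · exact absurd h hn'
      · exact h
    have hp2 : p.2 = 0 := by
      apply Subtype.ext
      have hv : n • (p.2 : ℚ × (ℤ → ℚ)) = 0 := by
        have := congrArg (Subtype.val) h2
        simpa using this
      have hv' : (n : ℚ) • (p.2 : ℚ × (ℤ → ℚ)) = 0 := by
        rw [← hv]; simp [Nat.cast_smul_eq_nsmul]
      rcases smul_eq_zero.mp hv' with h | h
      · exact absurd h hn'
      · exact h
    exact Prod.ext hp1 hp2
  · -- (v) 2•g ∈ C
    right
    constructor
    · show (2:ℕ) • (0:ℚ) = 0; simp
    · have hval : ((2:ℕ) • (⟨halfElem, halfElem_mem_bbQ⟩ : ↥bbQ) : ℚ × (ℤ → ℚ))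
          = ((1 : ℚ), fun m : ℤ => ((3 : ℚ) ^ m.natAbs)) := by
        show (2:ℕ) • halfElem = _
        ext
        · show (2:ℕ) • (1/2 : ℚ) = 1; norm_num
        · show (2:ℕ) • ((3:ℚ) ^ _ / 2) = _
          rw [nsmul_eq_mul]; push_cast; ring
      show ((2:ℕ) • (⟨halfElem, halfElem_mem_bbQ⟩ : ↥bbQ) : ℚ × (ℤ → ℚ)) ∈ bbZpos
      rw [hval]
      refine ⟨⟨?_, ⟨1, 0, by norm_num⟩, fun m => ⟨3 ^ m.natAbs, by push_cast; ring⟩⟩,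
        by norm_num, fun m => by positivity⟩
      · show Set.Finite {m : ℤ | (3:ℚ) ^ m.natAbs ≠ 3 ^ m.natAbs * 1}
        have : {m : ℤ | (3:ℚ) ^ m.natAbs ≠ 3 ^ m.natAbs * 1} = ∅ := by
          ext m; simp
        rw [this]; exact Set.finite_empty
  · -- (v) g ∉ C
    rintro (h | ⟨_, ⟨⟨_, _, hint⟩, _, _⟩⟩)
    · exact lt_irrefl _ h
    · obtain ⟨n, hn⟩ := hint 0
      have : (1/2 : ℚ) = (n : ℚ) := by
        have : halfElem.2 0 = (1/2 : ℚ) := by simp [halfElem]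
        rw [← this]; exact hn
      have h1 : (2 : ℚ) * n = 1 := by rw [← this]; norm_num
      have : (2 * n : ℤ) = 1 := by exact_mod_cast h1
      omega

end
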